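/- For integers p, q, m with m ≥ 1 and 0 ≤ p, q ≤ m, one has |F(p,q,m)| ≤ exp(− min(p, m−p) · min(q, m−q) / (2m)). -/

import Mathlib

open BigOperators

section KrawtchoukAux
open Finset Polynomial

/-- Alternating sum of a sequence that increases up to `j0` then decreases is
bounded in absolute value by `b j0`. -/
lemma alt_abs_le (b : ℕ → ℝ) (N j0 : ℕ) (hj0 : j0 ≤ N)
    (hnn : ∀ i, 0 ≤ b i)
    (hasc : ∀ i, i < j0 → b i ≤ b (i+1))
    (hdesc : ∀ i, j0 ≤ i → i < N → b (i+1) ≤ b i) :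
    |∑ j ∈ Finset.range (N+1), (-1)^j * b j| ≤ b j0 := by
  set T : ℕ → ℝ := fun n => ∑ j ∈ Finset.range (n+1), (-1)^j * b j with hT
  have hTsucc : ∀ n, T (n+1) = T n + (-1)^(n+1) * b (n+1) := by
    intro n; simp [hT, Finset.sum_range_succ]
  have claim1 : ∀ n, n ≤ j0 → 0 ≤ (-1)^n * T n ∧ (-1)^n * T n ≤ b n := by
    intro n
    induction n with
    | zero =>
      intro _
      constructor
      · simpa [hT] using hnn 0
      · simp [hT]
    | succ n ih =>
      intro hn
      have hn' : n ≤ j0 := by omega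
      obtain ⟨h1, h2⟩ := ih hn'
      have hpow : (-1:ℝ)^(n+1) = -(-1)^n := by rw [pow_succ]; ring
      have hsq : ((-1:ℝ)^n)^2 = 1 := by rw [← pow_mul, mul_comm, pow_mul]; norm_num
      have hstep : (-1)^(n+1) * T (n+1) = b (n+1) - (-1)^n * T n := by
        rw [hTsucc, hpow]; linear_combination b (n+1) * hsq
      constructor
      · rw [hstep]
        have : b n ≤ b (n+1) := hasc n (by omega)
        linarith
      · rw [hstep]; linarith [hnn (n+1)]
  have claim2 : ∀ n, j0 ≤ n → n ≤ N → b n - b j0 ≤ (-1)^n * T n ∧ (-1)^n * T n ≤ b j0 := by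
    intro n hn
    induction n, hn using Nat.le_induction with
    | base => intro _; obtain ⟨h1, h2⟩ := claim1 j0 le_rfl; constructor <;> linarith
    | succ n hn ih =>
      intro hN
      obtain ⟨h1, h2⟩ := ih (by omega)
      have hpow : (-1:ℝ)^(n+1) = -(-1)^n := by rw [pow_succ]; ring
      have hsq : ((-1:ℝ)^n)^2 = 1 := by rw [← pow_mul, mul_comm, pow_mul]; norm_num
      have hstep : (-1)^(n+1) * T (n+1) = b (n+1) - (-1)^n * T n := by
        rw [hTsucc, hpow]; linear_combination b (n+1) * hsq
      have hd : b (n+1) ≤ b n := hdesc n hn (by omega)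
      constructor
      · rw [hstep]; linarith
      · rw [hstep]; linarith
  obtain ⟨h1, h2⟩ := claim2 N hj0 le_rfl
  have habs : |(-1 : ℝ)^N * T N| = |T N| := by
    rw [abs_mul, abs_pow, abs_neg, abs_one, one_pow, one_mul]
  rw [← habs]
  rw [abs_le]
  constructor
  · linarith [hnn N]
  · exact h2

lemma exists_peak (b : ℕ → ℝ) (N : ℕ) (hnn : ∀ i, 0 ≤ b i)
    (hlc : ∀ i, i + 2 ≤ N → b i * b (i+2) ≤ b (i+1) * b (i+1))
    (hsupp : ∀ i k l, i ≤ k → k ≤ l → l ≤ N → b i ≠ 0 → b l ≠ 0 → b k ≠ 0) :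
    ∃ j0, j0 ≤ N ∧ (∀ i, i < j0 → b i ≤ b (i+1)) ∧ (∀ i, j0 ≤ i → i < N → b (i+1) ≤ b i) := by
  obtain ⟨j0, hj0mem, hmax⟩ := Finset.exists_max_image (Finset.range (N+1)) b ⟨0, by simp⟩
  rw [Finset.mem_range] at hj0mem
  have hj0 : j0 ≤ N := by omega
  have hmax' : ∀ i, i ≤ N → b i ≤ b j0 := fun i hi => hmax i (Finset.mem_range.mpr (by omega))
  by_cases hz : b j0 = 0
  · refine ⟨j0, hj0, ?_, ?_⟩
    · intro i hi
      have h1 : b i = 0 := le_antisymm (hz ▸ hmax' i (by omega)) (hnn i)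
      have h2 : b (i+1) = 0 := le_antisymm (hz ▸ hmax' (i+1) (by omega)) (hnn (i+1))
      rw [h1, h2]
    · intro i hi hiN
      have h1 : b i = 0 := le_antisymm (hz ▸ hmax' i (by omega)) (hnn i)
      have h2 : b (i+1) = 0 := le_antisymm (hz ▸ hmax' (i+1) (by omega)) (hnn (i+1))
      rw [h1, h2]
  · refine ⟨j0, hj0, ?_, ?_⟩
    · -- ascent, downward induction on distance to j0
      have key : ∀ k i, j0 = i + k + 1 → b i ≤ b (i+1) := by
        intro k
        induction k with
        | zero =>
          intro i hi
          have : i + 1 = j0 := by omega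
          rw [this]; exact hmax' i (by omega)
        | succ k ih =>
          intro i hi
          have h1 : b (i+1) ≤ b (i+2) := ih (i+1) (by omega)
          by_cases h0 : b (i+1) = 0
          · have : b i = 0 := by
              by_contra hbi
              exact (hsupp i (i+1) j0 (by omega) (by omega) hj0 hbi hz) h0
            rw [this, h0]
          · have hpos : 0 < b (i+2) := lt_of_lt_of_le (lt_of_le_of_ne (hnn (i+1)) (Ne.symm h0)) h1
            have hlc' := hlc i (by omega)
            have : b i * b (i+2) ≤ b (i+1) * b (i+2) := by
              calc b i * b (i+2) ≤ b (i+1) * b (i+1) := hlc'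
                _ ≤ b (i+1) * b (i+2) := by
                    apply mul_le_mul_of_nonneg_left h1 (hnn (i+1))
            exact le_of_mul_le_mul_right this hpos
      intro i hi
      exact key (j0 - i - 1) i (by omega)
    · -- descent, upward induction from j0
      intro i hi
      induction i, hi using Nat.le_induction with
      | base => intro hN; exact hmax' (j0+1) (by omega)
      | succ i hi ih =>
        intro hN
        have h1 : b (i+1) ≤ b i := ih (by omega)
        by_cases h0 : b i = 0
        · have hbi1 : b (i+1) = 0 := le_antisymm (h0 ▸ h1) (hnn (i+1))
          have : b (i+2) = 0 := by
            by_contra hb2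
            exact (hsupp j0 i (i+2) hi (by omega) (by omega) hz hb2) h0
          rw [this, hbi1]
        · have hpos : 0 < b i := lt_of_le_of_ne (hnn i) (Ne.symm h0)
          have hlc' := hlc i (by omega)
          have : b i * b (i+2) ≤ b i * b (i+1) := by
            calc b i * b (i+2) ≤ b (i+1) * b (i+1) := hlc'
              _ ≤ b i * b (i+1) := mul_le_mul_of_nonneg_right h1 (hnn (i+1))
          exact le_of_mul_le_mul_left this hpos

/-- Log-concavity of binomial coefficients (one step). -/
lemma choose_logconcave (n a : ℕ) :
    n.choose a * n.choose (a+2) ≤ n.choose (a+1) * n.choose (a+1) := by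
  have e1 : n.choose (a+1) * (a+1) = n.choose a * (n - a) := Nat.choose_succ_right_eq n a
  have e2 : n.choose (a+2) * (a+2) = n.choose (a+1) * (n - (a+1)) :=
    Nat.choose_succ_right_eq n (a+1)
  have hmul : (a+1) * (n - (a+1)) ≤ (n - a) * (a+2) := by
    have h1 : n - (a+1) ≤ n - a := by omega
    have h2 : (a+1) ≤ (a+2) := by omega
    calc (a+1) * (n - (a+1)) ≤ (a+2) * (n - a) := Nat.mul_le_mul h2 h1
      _ = (n - a) * (a+2) := Nat.mul_comm _ _
  have key : n.choose a * n.choose (a+2) * ((a+1)*(a+2))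
      ≤ n.choose (a+1) * n.choose (a+1) * ((a+1)*(a+2)) := by
    calc n.choose a * n.choose (a+2) * ((a+1)*(a+2))
        = (n.choose a * (n.choose (a+2) * (a+2))) * (a+1) := by ring
      _ = (n.choose a * (n.choose (a+1) * (n - (a+1)))) * (a+1) := by rw [e2]
      _ = (n.choose a * n.choose (a+1)) * ((a+1) * (n - (a+1))) := by ring
      _ ≤ (n.choose a * n.choose (a+1)) * ((n - a) * (a+2)) := Nat.mul_le_mul_left _ hmul
      _ = (n.choose a * (n - a)) * (n.choose (a+1) * (a+2)) := by ring
      _ = (n.choose (a+1) * (a+1)) * (n.choose (a+1) * (a+2)) := by rw [e1]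
      _ = n.choose (a+1) * n.choose (a+1) * ((a+1)*(a+2)) := by ring
  exact Nat.le_of_mul_le_mul_right key (by positivity)

/-- Two-step log-concavity. -/
lemma choose_logconcave2 (n a : ℕ) :
    n.choose a * n.choose (a+4) ≤ n.choose (a+2) * n.choose (a+2) := by
  by_cases hz : n.choose (a+2) = 0
  · have : a + 2 > n := by
      by_contra h
      exact (Nat.choose_pos (by omega : a+2 ≤ n)).ne' hz
    have h4 : n.choose (a+4) = 0 := Nat.choose_eq_zero_of_lt (by omega)
    simp [h4]
  · have h1 := choose_logconcave n a
    have h2 := choose_logconcave n (a+1)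
    have h3 := choose_logconcave n (a+2)
    have hcomb : (n.choose a * n.choose (a+4)) * (n.choose (a+2) * n.choose (a+2))
        ≤ (n.choose (a+2) * n.choose (a+2)) * (n.choose (a+2) * n.choose (a+2)) := by
      calc (n.choose a * n.choose (a+4)) * (n.choose (a+2) * n.choose (a+2))
          = (n.choose a * n.choose (a+2)) * (n.choose (a+2) * n.choose (a+4)) := by ring
        _ ≤ (n.choose (a+1) * n.choose (a+1)) * (n.choose (a+3) * n.choose (a+3)) :=
            Nat.mul_le_mul h1 h3
        _ = (n.choose (a+1) * n.choose (a+3)) * (n.choose (a+1) * n.choose (a+3)) := by ring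
        _ ≤ (n.choose (a+2) * n.choose (a+2)) * (n.choose (a+2) * n.choose (a+2)) :=
            Nat.mul_le_mul h2 h2
    exact Nat.le_of_mul_le_mul_right hcomb (Nat.pos_of_ne_zero (by positivity))

/-- A single term of Vandermonde's identity. -/
lemma choose_mul_le_add (a b c d : ℕ) : a.choose c * b.choose d ≤ (a+b).choose (c+d) := by
  rw [Nat.add_choose_eq]
  exact Finset.single_le_sum (f := fun ij : ℕ × ℕ => a.choose ij.1 * b.choose ij.2)
    (fun i _ => Nat.zero_le _) (Finset.HasAntidiagonal.mem_antidiagonal.mpr rfl : (c, d) ∈ Finset.HasAntidiagonal.antidiagonal (c + d))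

/-- `C(n,a) C(n-a,b) = C(n,b) C(n-b,a)` -/
lemma choose_choose_symm (n a b : ℕ) :
    n.choose a * (n-a).choose b = n.choose b * (n-b).choose a := by
  rcases le_or_gt (a+b) n with h | h
  · have e1 : n.choose (a+b) * (a+b).choose a = n.choose a * (n-a).choose b := by
      have := Nat.choose_mul (n := n) (k := a+b) (s := a) (by omega)
      simpa [Nat.add_sub_cancel_left] using this
    have e2 : n.choose (a+b) * (a+b).choose b = n.choose b * (n-b).choose a := by
      have := Nat.choose_mul (n := n) (k := a+b) (s := b) (by omega)
      have h2 : a + b - b = a := by omega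
      simpa [h2] using this
    have e3 : (a+b).choose a = (a+b).choose b := by
      have := Nat.choose_symm (n := a+b) (k := a) (by omega)
      have h3 : a + b - a = b := by omega
      rw [h3] at this
      exact this.symm
    rw [← e1, ← e2, e3]
  · have z1 : (n-a).choose b = 0 ∨ n.choose a = 0 := by
      rcases le_or_gt a n with ha | ha
      · left; exact Nat.choose_eq_zero_of_lt (by omega)
      · right; exact Nat.choose_eq_zero_of_lt ha
    have z2 : (n-b).choose a = 0 ∨ n.choose b = 0 := by
      rcases le_or_gt b n with hb | hb
      · left; exact Nat.choose_eq_zero_of_lt (by omega)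
      · right; exact Nat.choose_eq_zero_of_lt hb
    rcases z1 with z | z <;> rcases z2 with z' | z' <;> simp [z, z']

lemma claimA (m p : ℕ) (hm : 0 < m) (h2p : 2*p ≤ m) :
    ∀ t : ℕ, ((m - 2*p).choose t : ℝ) ≤ (m.choose t : ℝ) * Real.exp (-(2*(p:ℝ)*t)/m) := by
  intro t
  induction t with
  | zero => simp
  | succ t ih =>
    by_cases hle : t + 1 ≤ m - 2*p
    · have htm : t < m := by omega
      have e1 : ((m - 2*p).choose (t+1) : ℝ) * (t+1)
          = ((m - 2*p).choose t : ℝ) * (((m - 2*p : ℕ):ℝ) - (t:ℝ)) := by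
        have := Nat.choose_succ_right_eq (m - 2*p) t
        have hcast := congrArg (fun x : ℕ => (x : ℝ)) this
        push_cast [Nat.cast_sub (by omega : t ≤ m - 2*p)] at hcast
        convert hcast using 2 <;> push_cast <;> ring
      have e2 : ((m.choose (t+1) : ℝ)) * (t+1) = (m.choose t : ℝ) * ((m:ℝ) - t) := by
        have := Nat.choose_succ_right_eq m t
        have hcast := congrArg (fun x : ℕ => (x : ℝ)) this
        push_cast [Nat.cast_sub (by omega : t ≤ m)] at hcast
        exact hcast
      have hM : ((m - 2*p : ℕ) : ℝ) = (m:ℝ) - 2*p := by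
        push_cast [Nat.cast_sub h2p]; ring
      have hmpos : (0:ℝ) < m := by exact_mod_cast hm
      have hexp : (1 : ℝ) - 2*(p:ℝ)/m ≤ Real.exp (-(2*(p:ℝ))/m) := by
        have h := Real.add_one_le_exp (-(2*(p:ℝ))/m)
        ring_nf at h ⊢
        linarith
      have hfac : ((m - 2*p : ℕ) : ℝ) - t ≤ ((m:ℝ) - t) * Real.exp (-(2*(p:ℝ))/m) := by
        have h1 : ((m:ℝ) - t) * ((1:ℝ) - 2*(p:ℝ)/m) ≤ ((m:ℝ) - t) * Real.exp (-(2*(p:ℝ))/m) := by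
          apply mul_le_mul_of_nonneg_left hexp
          have : (t:ℝ) ≤ (m:ℝ) := by exact_mod_cast htm.le
          linarith
        have h2 : ((m - 2*p : ℕ) : ℝ) - t ≤ ((m:ℝ) - t) * ((1:ℝ) - 2*(p:ℝ)/m) := by
          rw [hM, ← sub_nonneg]
          have expand : ((m:ℝ) - t) * (1 - 2*(p:ℝ)/m) - ((m:ℝ) - 2*p - t)
              = (t:ℝ) * (2*p) / m := by
            field_simp
            ring
          rw [expand]
          positivity
        linarith
      have hfpos : (0:ℝ) < (t:ℝ) + 1 := by positivity
      have key : ((m - 2*p).choose (t+1) : ℝ) * ((t:ℝ)+1)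
          ≤ (m.choose (t+1) : ℝ) * Real.exp (-(2*(p:ℝ)*((t:ℝ)+1))/m) * ((t:ℝ)+1) := by
        calc ((m - 2*p).choose (t+1) : ℝ) * ((t:ℝ)+1)
            = ((m - 2*p).choose t : ℝ) * (((m - 2*p:ℕ):ℝ) - t) := e1
          _ ≤ ((m.choose t : ℝ) * Real.exp (-(2*(p:ℝ)*t)/m)) * (((m:ℝ) - t) * Real.exp (-(2*(p:ℝ))/m)) := by
              apply mul_le_mul ih hfac ?_ ?_
              · have : (t:ℝ) ≤ ((m - 2*p:ℕ):ℝ) := by exact_mod_cast (by omega : t ≤ m - 2*p)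
                linarith
              · positivity
          _ = ((m.choose t : ℝ) * ((m:ℝ) - t)) * Real.exp (-(2*(p:ℝ)*t)/m + -(2*(p:ℝ))/m) := by
              rw [Real.exp_add]; ring
          _ = ((m.choose t : ℝ) * ((m:ℝ) - t)) * Real.exp (-(2*(p:ℝ)*((t:ℝ)+1))/m) := by
              congr 1
              congr 1
              field_simp
              ring
          _ = (m.choose (t+1) : ℝ) * Real.exp (-(2*(p:ℝ)*((t:ℝ)+1))/m) * ((t:ℝ)+1) := by
              rw [← e2]; ring
      have := le_of_mul_le_mul_right key hfpos
      convert this using 3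
      · rfl
      push_cast
      ring
    · have hz : (m - 2*p).choose (t+1) = 0 := Nat.choose_eq_zero_of_lt (by omega)
      rw [hz]
      push_cast
      positivity

lemma claimB (m q : ℕ) (h2q : 2*q ≤ m) :
    ∀ s : ℕ, s ≤ q → (m.choose (q - s) : ℝ) ≤ (m.choose q : ℝ) * Real.exp (-(s:ℝ)^2/m) := by
  intro s
  induction s with
  | zero => simp
  | succ s ih =>
    intro hs
    have hs' : s ≤ q := by omega
    have ihs := ih hs'
    have hm : 0 < m := by omega
    have hmpos : (0:ℝ) < m := by exact_mod_cast hm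
    -- C(m, q-s-1) * (m - (q-s-1)) relation: C(m, q-s) * (q-s) = C(m, q-s-1) * (m - (q-s-1))
    have e1 : (m.choose (q - s) : ℝ) * ((q:ℝ) - s)
        = (m.choose (q - (s+1)) : ℝ) * ((m:ℝ) - (q - (s:ℝ) - 1)) := by
      have h := Nat.choose_succ_right_eq m (q - (s+1))
      have hqs : q - (s+1) + 1 = q - s := by omega
      rw [hqs] at h
      have hcast := congrArg (fun x : ℕ => (x : ℝ)) h
      push_cast [Nat.cast_sub (by omega : q - (s+1) ≤ m), Nat.cast_sub (by omega : s+1 ≤ q), Nat.cast_sub (by omega : s ≤ q)] at hcast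
      convert hcast using 1 <;> ring
    have hden : (0:ℝ) < (m:ℝ) - (q - (s:ℝ) - 1) := by
      have h1 : (q:ℝ) ≤ (m:ℝ) := by exact_mod_cast (by omega : q ≤ m)
      linarith
    -- factor bound : (q - s) ≤ (m - q + s + 1) * exp(-(2s+1)/m)
    have hint : ((q:ℝ) - s) * m ≤ ((m:ℝ) - 2*s - 1) * ((m:ℝ) - (q - (s:ℝ) - 1)) := by
      have hq' : (s:ℝ) + 1 ≤ q := by exact_mod_cast (show ((s+1:ℕ):ℝ) ≤ q from by exact_mod_cast hs)
      have h2q' : 2*(q:ℝ) ≤ m := by exact_mod_cast (show ((2*q:ℕ):ℝ) ≤ m from by exact_mod_cast h2q)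
      nlinarith [hq', h2q', sq_nonneg ((m:ℝ) - 2*q), mul_nonneg (sub_nonneg.mpr h2q') (sub_nonneg.mpr hq')]
    have hexp : ((m:ℝ) - 2*s - 1)/m ≤ Real.exp (-(2*(s:ℝ)+1)/m) := by
      have h := Real.add_one_le_exp (-(2*(s:ℝ)+1)/m)
      have : (-(2*(s:ℝ)+1)/m) + 1 = ((m:ℝ) - 2*s - 1)/m := by field_simp; ring
      linarith [this ▸ h]
    have hfac : (q:ℝ) - s ≤ ((m:ℝ) - (q - (s:ℝ) - 1)) * Real.exp (-(2*(s:ℝ)+1)/m) := by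
      have h1 : ((q:ℝ) - s) ≤ ((m:ℝ) - 2*s - 1) * ((m:ℝ) - (q - (s:ℝ) - 1)) / m := by
        rw [le_div_iff₀ hmpos]
        exact hint
      have h2 : ((m:ℝ) - 2*s - 1) * ((m:ℝ) - (q - (s:ℝ) - 1)) / m
          = (((m:ℝ) - 2*s - 1)/m) * ((m:ℝ) - (q - (s:ℝ) - 1)) := by ring
      have h3 : (((m:ℝ) - 2*s - 1)/m) * ((m:ℝ) - (q - (s:ℝ) - 1))
          ≤ Real.exp (-(2*(s:ℝ)+1)/m) * ((m:ℝ) - (q - (s:ℝ) - 1)) :=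
        mul_le_mul_of_nonneg_right hexp hden.le
      linarith [h1, h2 ▸ h1, h3]
    -- combine
    have key : (m.choose (q - (s+1)) : ℝ) * ((m:ℝ) - (q - (s:ℝ) - 1))
        ≤ ((m.choose q : ℝ) * Real.exp (-((s:ℝ)+1)^2/m)) * ((m:ℝ) - (q - (s:ℝ) - 1)) := by
      rw [← e1]
      calc (m.choose (q - s) : ℝ) * ((q:ℝ) - s)
          ≤ ((m.choose q : ℝ) * Real.exp (-(s:ℝ)^2/m)) * (((m:ℝ) - (q - (s:ℝ) - 1)) * Real.exp (-(2*(s:ℝ)+1)/m)) := by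
            apply mul_le_mul ihs hfac ?_ ?_
            · have : ((s:ℝ)) ≤ q := by exact_mod_cast hs'
              linarith
            · positivity
        _ = ((m.choose q : ℝ) * (Real.exp (-(s:ℝ)^2/m) * Real.exp (-(2*(s:ℝ)+1)/m))) * ((m:ℝ) - (q - (s:ℝ) - 1)) := by ring
        _ = ((m.choose q : ℝ) * Real.exp (-((s:ℝ)+1)^2/m)) * ((m:ℝ) - (q - (s:ℝ) - 1)) := by
            rw [← Real.exp_add]
            congr 2
            field_simp
            ring
    have hres := le_of_mul_le_mul_right key hden
    convert hres using 2
    · rfl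
    push_cast
    ring

lemma coeff_one_sub_X_pow (p k : ℕ) :
    ((1 - X : Polynomial ℝ)^p).coeff k = (-1)^k * p.choose k := by
  have h1 : ((1 - X : Polynomial ℝ))^p = (-1)^p * (X + C (-1:ℝ))^p := by
    rw [← mul_pow]
    congr 1
    simp
    ring
  rw [h1]
  have h2 : ((-1 : Polynomial ℝ)^p * (X + C (-1:ℝ))^p).coeff k
      = (-1:ℝ)^p * ((X + C (-1:ℝ))^p).coeff k := by
    rw [show ((-1 : Polynomial ℝ))^p = C ((-1:ℝ)^p) by simp, coeff_C_mul]
  rw [h2, coeff_X_add_C_pow]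
  by_cases hk : k ≤ p
  · have : (-1:ℝ)^p * (-1)^(p-k) = (-1)^k := by
      rw [← pow_add]
      have h3 : ((-1:ℝ))^(p + (p-k)) * (-1)^k = (-1)^(p + (p-k) + k) := by rw [← pow_add]
      have h4 : p + (p - k) + k = 2*p := by omega
      have h5 : ((-1:ℝ))^(2*p) = 1 := by rw [pow_mul]; norm_num
      have h6 := h3.trans (by rw [h4, h5])
      -- (-1)^(p+(p-k)) * (-1)^k = 1 → (-1)^(p+(p-k)) = (-1)^k
      have h7 : ((-1:ℝ))^k * ((-1:ℝ))^k = 1 := by rw [← pow_add]; rw [show k + k = 2*k by omega, pow_mul]; norm_num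
      calc ((-1:ℝ))^(p + (p-k)) = ((-1:ℝ))^(p + (p-k)) * (((-1:ℝ))^k * ((-1:ℝ))^k) := by rw [h7, mul_one]
        _ = (((-1:ℝ))^(p + (p-k)) * ((-1:ℝ))^k) * ((-1:ℝ))^k := by ring
        _ = (-1)^k := by rw [h6, one_mul]
    rw [← mul_assoc, this]
  · rw [Nat.choose_eq_zero_of_lt (by omega)]
    simp

lemma coeff_one_sub_X_sq_pow (p a : ℕ) :
    ((1 - X^2 : Polynomial ℝ)^p).coeff a
      = if 2 ∣ a then ((-1:ℝ))^(a/2) * p.choose (a/2) else 0 := by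
  have hexp : (1 - X^2 : Polynomial ℝ)^p
      = ∑ j ∈ Finset.range (p+1), C ((-1:ℝ)^j * p.choose j) * X^(2*j) := by
    rw [sub_eq_add_neg, add_comm, add_pow]
    apply Finset.sum_congr rfl
    intro j hj
    have : (-(X^2) : Polynomial ℝ)^j = C ((-1:ℝ)^j) * X^(2*j) := by
      rw [neg_pow, ← pow_mul]
      simp [mul_comm]
    rw [this]
    simp [C_eq_natCast]
    ring
  rw [hexp, finset_sum_coeff]
  simp only [coeff_C_mul, coeff_X_pow]
  by_cases hdvd : 2 ∣ a
  · obtain ⟨j0, hj0⟩ := hdvd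
    have ha2 : a / 2 = j0 := by omega
    rw [if_pos ⟨j0, hj0⟩, ha2]
    by_cases hj0p : j0 ≤ p
    · rw [Finset.sum_eq_single j0]
      · simp [hj0]
      · intro j hj hne
        have : ¬ (a = 2*j) := by omega
        simp [this]
      · intro h
        exact absurd (Finset.mem_range.mpr (by omega)) h
    · have : ∀ j ∈ Finset.range (p+1), (-1:ℝ)^j * p.choose j * (if a = 2*j then 1 else 0) = 0 := by
        intro j hj
        rw [Finset.mem_range] at hj
        have : ¬ (a = 2*j) := by omega
        simp [this]
      rw [Finset.sum_eq_zero this, Nat.choose_eq_zero_of_lt (by omega)]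
      simp
  · have : ∀ j ∈ Finset.range (p+1), (-1:ℝ)^j * p.choose j * (if a = 2*j then 1 else 0) = 0 := by
      intro j hj
      have : ¬ (a = 2*j) := by intro h; exact hdvd ⟨j, h⟩
      simp [this]
    rw [Finset.sum_eq_zero this, if_neg hdvd]

lemma sum_eq_coeff (p n q : ℕ) :
    (((1 - X)^p * (1 + X)^n : Polynomial ℝ)).coeff q
      = ∑ k ∈ Finset.range (q+1), (-1:ℝ)^k * p.choose k * (n.choose (q-k)) := by
  rw [coeff_mul, Finset.Nat.sum_antidiagonal_eq_sum_range_succ_mk]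
  apply Finset.sum_congr rfl
  intro k hk
  rw [coeff_one_sub_X_pow, coeff_one_add_X_pow]

lemma sum_eq_coeff2 (p n q : ℕ) :
    (((1 - X^2)^p * (1 + X)^n : Polynomial ℝ)).coeff q
      = ∑ j ∈ Finset.range (q/2+1), (-1:ℝ)^j * p.choose j * (n.choose (q-2*j)) := by
  rw [coeff_mul, Finset.Nat.sum_antidiagonal_eq_sum_range_succ_mk]
  have step1 : ∀ k ∈ Finset.range (q+1),
      ((1 - X^2 : Polynomial ℝ)^p).coeff k * ((1 + X : Polynomial ℝ)^n).coeff (q - k)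
      = if 2 ∣ k then (-1:ℝ)^(k/2) * p.choose (k/2) * (n.choose (q-k)) else 0 := by
    intro k hk
    rw [coeff_one_sub_X_sq_pow, coeff_one_add_X_pow]
    by_cases h : 2 ∣ k
    · rw [if_pos h, if_pos h]
    · rw [if_neg h, if_neg h, zero_mul]
  rw [Finset.sum_congr rfl step1, ← Finset.sum_filter]
  have himg : Finset.filter (fun k => 2 ∣ k) (Finset.range (q+1))
      = Finset.image (fun j => 2*j) (Finset.range (q/2+1)) := by
    ext k
    simp only [Finset.mem_filter, Finset.mem_range, Finset.mem_image]
    constructor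
    · rintro ⟨hk, j, hj⟩
      exact ⟨j, by omega, by omega⟩
    · rintro ⟨j, hj, hjk⟩
      exact ⟨by omega, j, by omega⟩
  rw [himg, Finset.sum_image (by intro a _ b _ h; simp only at h; omega)]
  apply Finset.sum_congr rfl
  intro j hj
  have : 2*j/2 = j := by omega
  rw [this]

lemma key_identity (p q m : ℕ) (h2p : 2*p ≤ m) :
    ∑ k ∈ Finset.range (q+1), (-1:ℝ)^k * p.choose k * ((m-p).choose (q-k))
      = ∑ j ∈ Finset.range (q/2+1), (-1:ℝ)^j * p.choose j * ((m-2*p).choose (q-2*j)) := by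
  rw [← sum_eq_coeff p (m-p) q, ← sum_eq_coeff2 p (m-2*p) q]
  congr 1
  have hm : m - p = p + (m - 2*p) := by omega
  rw [hm, pow_add, ← mul_assoc, ← mul_pow]
  have : ((1 - X) * (1 + X) : Polynomial ℝ) = 1 - X^2 := by ring
  rw [this]

lemma term_bound (p q m j : ℕ) (hm : 0 < m) (hpq : p ≤ q) (h2q : 2*q ≤ m) (hj : 2*j ≤ q) :
    (p.choose j : ℝ) * ((m-2*p).choose (q-2*j) : ℝ)
      ≤ (m.choose q : ℝ) * Real.exp (-((p:ℝ)*q)/(2*m)) := by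
  have h2p : 2*p ≤ m := by omega
  have hmpos : (0:ℝ) < m := by exact_mod_cast hm
  set A := (p.choose j : ℝ) with hA
  set B := ((m-2*p).choose (q-2*j) : ℝ) with hB
  set Cq := (m.choose q : ℝ) with hCq
  set E := Real.exp (-((p:ℝ)*q)/(2*m)) with hE
  have hAnn : 0 ≤ A := by positivity
  have hBnn : 0 ≤ B := by positivity
  have hCnn : 0 ≤ Cq := by positivity
  -- Vandermonde bound
  have hV : A * A * B ≤ Cq := by
    have h1 : p.choose j * p.choose j ≤ (2*p).choose (2*j) := by
      have := choose_mul_le_add p p j j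
      rwa [show p + p = 2*p by ring, show j + j = 2*j by ring] at this
    have h2 : (2*p).choose (2*j) * ((m-2*p).choose (q-2*j)) ≤ m.choose q := by
      have := choose_mul_le_add (2*p) (m-2*p) (2*j) (q-2*j)
      rwa [show 2*p + (m-2*p) = m by omega, show 2*j + (q-2*j) = q by omega] at this
    have : p.choose j * p.choose j * ((m-2*p).choose (q-2*j)) ≤ m.choose q :=
      le_trans (Nat.mul_le_mul_right _ h1) h2
    rw [hA, hB, hCq]
    exact_mod_cast this
  -- analytic bound on B
  have hcastQ : ((q - 2*j : ℕ) : ℝ) = (q:ℝ) - 2*j := by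
    push_cast [Nat.cast_sub hj]; ring
  have hBle : B ≤ Cq * Real.exp (-(2*(p:ℝ)*((q:ℝ)-2*j) + (2*(j:ℝ))^2)/m) := by
    have hA1 := claimA m p hm h2p (q - 2*j)
    have hB1 := claimB m q h2q (2*j) hj
    rw [hcastQ] at hA1
    have hcast2 : ((2*j : ℕ) : ℝ) = 2*(j:ℝ) := by push_cast; ring
    rw [hcast2] at hB1
    calc B ≤ (m.choose (q-2*j) : ℝ) * Real.exp (-(2*(p:ℝ)*((q:ℝ)-2*j))/m) := hA1
      _ ≤ (Cq * Real.exp (-(2*(j:ℝ))^2/m)) * Real.exp (-(2*(p:ℝ)*((q:ℝ)-2*j))/m) := by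
          apply mul_le_mul_of_nonneg_right hB1 (le_of_lt (Real.exp_pos _))
      _ = Cq * Real.exp (-(2*(j:ℝ))^2/m + -(2*(p:ℝ)*((q:ℝ)-2*j))/m) := by
          rw [Real.exp_add]; ring
      _ = Cq * Real.exp (-(2*(p:ℝ)*((q:ℝ)-2*j) + (2*(j:ℝ))^2)/m) := by
          congr 1
          congr 1
          field_simp
          ring
  -- exponent comparison
  have hexp : Real.exp (-(2*(p:ℝ)*((q:ℝ)-2*j) + (2*(j:ℝ))^2)/m) ≤ E * E := by
    rw [hE, ← Real.exp_add]
    apply Real.exp_le_exp.mpr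
    rw [← add_div, div_le_div_iff₀ hmpos (by positivity : (0:ℝ) < 2*m)]
    have hp' : (p:ℝ) ≤ q := by exact_mod_cast hpq
    have hpnn : (0:ℝ) ≤ p := by positivity
    nlinarith [sq_nonneg ((p:ℝ) - 2*j), mul_nonneg hpnn (sub_nonneg.mpr hp')]
  have hEpos : 0 < E := Real.exp_pos _
  -- combine : (A*B)^2 ≤ (Cq * E)^2
  have hsq : (A*B)^2 ≤ (Cq*E)^2 := by
    calc (A*B)^2 = (A*A*B)*B := by ring
      _ ≤ Cq * B := mul_le_mul_of_nonneg_right hV hBnn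
      _ ≤ Cq * (Cq * Real.exp (-(2*(p:ℝ)*((q:ℝ)-2*j) + (2*(j:ℝ))^2)/m)) :=
          mul_le_mul_of_nonneg_left hBle hCnn
      _ ≤ Cq * (Cq * (E*E)) := by
          apply mul_le_mul_of_nonneg_left (mul_le_mul_of_nonneg_left hexp hCnn) hCnn
      _ = (Cq*E)^2 := by ring
  have := le_of_pow_le_pow_left₀ (two_ne_zero) (by positivity : (0:ℝ) ≤ Cq*E) hsq
  exact this

end KrawtchoukAux

section KrawtchoukAux2
open Finset

/-- `F(p,q,m) = (Σ_k (−1)^k C(p,k) C(m−p, q−k)) / C(m,q)`. -/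
noncomputable def Fpqm (p q m : ℕ) : ℝ :=
  (∑ k ∈ Finset.range (q + 1),
      (-1 : ℝ) ^ k * (p.choose k) * ((m - p).choose (q - k))) / (m.choose q)

lemma core (p q m : ℕ) (hm : 0 < m) (hpq : p ≤ q) (h2q : 2*q ≤ m) :
    |Fpqm p q m| ≤ Real.exp (-((p:ℝ)*q)/(2*m)) := by
  have h2p : 2*p ≤ m := by omega
  have hqm : q ≤ m := by omega
  set M := m - 2*p with hM
  set b : ℕ → ℝ := fun j => (p.choose j : ℝ) * (M.choose (q - 2*j) : ℝ) with hb
  set N := q/2 with hN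
  have hnn : ∀ i, 0 ≤ b i := by intro i; rw [hb]; positivity
  have hlc : ∀ i, i + 2 ≤ N → b i * b (i+2) ≤ b (i+1) * b (i+1) := by
    intro i hi
    have ht : 2*(i+2) ≤ q := by omega
    set t := q - 2*(i+2) with hts
    have e1 : q - 2*(i+1) = t + 2 := by omega
    have e2 : q - 2*i = t + 4 := by omega
    have hn1 : p.choose i * p.choose (i+2) ≤ p.choose (i+1) * p.choose (i+1) :=
      choose_logconcave p i
    have hn2 : M.choose (t+4) * M.choose t ≤ M.choose (t+2) * M.choose (t+2) := by
      have := choose_logconcave2 M t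
      calc M.choose (t+4) * M.choose t = M.choose t * M.choose (t+4) := Nat.mul_comm _ _
        _ ≤ _ := this
    have hnat : (p.choose i * M.choose (q-2*i)) * (p.choose (i+2) * M.choose (q-2*(i+2)))
        ≤ (p.choose (i+1) * M.choose (q-2*(i+1))) * (p.choose (i+1) * M.choose (q-2*(i+1))) := by
      rw [e1, e2]
      calc (p.choose i * M.choose (t+4)) * (p.choose (i+2) * M.choose t)
          = (p.choose i * p.choose (i+2)) * (M.choose (t+4) * M.choose t) := by ring
        _ ≤ (p.choose (i+1) * p.choose (i+1)) * (M.choose (t+2) * M.choose (t+2)) :=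
            Nat.mul_le_mul hn1 hn2
        _ = (p.choose (i+1) * M.choose (t+2)) * (p.choose (i+1) * M.choose (t+2)) := by ring
    simp only [hb]
    exact_mod_cast hnat
  have hsupp : ∀ i k l, i ≤ k → k ≤ l → l ≤ N → b i ≠ 0 → b l ≠ 0 → b k ≠ 0 := by
    intro i k l hik hkl hlN hbi hbl
    simp only [hb] at hbi hbl ⊢
    have hip : (p.choose i : ℝ) ≠ 0 ∧ (M.choose (q - 2*i) : ℝ) ≠ 0 := by
      constructor <;> intro h <;> rw [h] at hbi <;> simp at hbi
    have hlp : (p.choose l : ℝ) ≠ 0 ∧ (M.choose (q - 2*l) : ℝ) ≠ 0 := by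
      constructor <;> intro h <;> rw [h] at hbl <;> simp at hbl
    have h1 : q - 2*i ≤ M := by
      by_contra h
      exact hip.2 (by exact_mod_cast congrArg (Nat.cast (R := ℝ)) (Nat.choose_eq_zero_of_lt (by omega)))
    have h2 : l ≤ p := by
      by_contra h
      exact hlp.1 (by exact_mod_cast congrArg (Nat.cast (R := ℝ)) (Nat.choose_eq_zero_of_lt (by omega)))
    have hk1 : k ≤ p := by omega
    have hk2 : q - 2*k ≤ M := by omega
    have : 0 < p.choose k * M.choose (q - 2*k) :=
      Nat.mul_pos (Nat.choose_pos hk1) (Nat.choose_pos hk2)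
    have := this.ne'
    intro hzero
    apply this
    exact_mod_cast hzero
  obtain ⟨j0, hj0N, hasc, hdesc⟩ := exists_peak b N hnn hlc hsupp
  have habs := alt_abs_le b N j0 hj0N hnn hasc hdesc
  have hbj0 : b j0 ≤ (m.choose q : ℝ) * Real.exp (-((p:ℝ)*q)/(2*m)) := by
    simp only [hb]
    exact term_bound p q m j0 hm hpq h2q (by omega)
  have hkey : ∑ k ∈ Finset.range (q+1), (-1:ℝ)^k * p.choose k * ((m-p).choose (q-k))
      = ∑ j ∈ Finset.range (N+1), (-1:ℝ)^j * b j := by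
    rw [key_identity p q m h2p]
    apply Finset.sum_congr rfl
    intro j hj
    simp only [hb]
    ring
  have hCpos : (0:ℝ) < (m.choose q : ℝ) := by
    exact_mod_cast Nat.choose_pos hqm
  rw [Fpqm, abs_div, abs_of_pos hCpos, div_le_iff₀ hCpos]
  rw [hkey]
  calc |∑ j ∈ Finset.range (N+1), (-1:ℝ)^j * b j| ≤ b j0 := habs
    _ ≤ (m.choose q : ℝ) * Real.exp (-((p:ℝ)*q)/(2*m)) := hbj0
    _ = Real.exp (-((p:ℝ)*q)/(2*m)) * (m.choose q : ℝ) := by ring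

/-- `C(n,a) C(n-a,b) = C(n,b) C(n-b,a)` -/

lemma nat_sym_id (m p q k : ℕ) (hp : p ≤ m) (hq : q ≤ m) (hk : k ≤ q) (hqp : q ≤ p) :
    m.choose p * (p.choose k * (m-p).choose (q-k))
      = m.choose q * (q.choose k * (m-q).choose (p-k)) := by
  have hkp : k ≤ p := le_trans hk hqp
  have e1 : m.choose p * p.choose k = m.choose k * (m-k).choose (p-k) :=
    Nat.choose_mul hkp
  have e2 : m.choose q * q.choose k = m.choose k * (m-k).choose (q-k) :=
    Nat.choose_mul hk
  have e3 : (m-k).choose (p-k) * ((m-k) - (p-k)).choose (q-k)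
      = (m-k).choose (q-k) * ((m-k) - (q-k)).choose (p-k) :=
    choose_choose_symm (m-k) (p-k) (q-k)
  have h1 : (m-k) - (p-k) = m - p := by omega
  have h2 : (m-k) - (q-k) = m - q := by omega
  rw [h1, h2] at e3
  calc m.choose p * (p.choose k * (m-p).choose (q-k))
      = (m.choose p * p.choose k) * (m-p).choose (q-k) := by ring
    _ = (m.choose k * (m-k).choose (p-k)) * (m-p).choose (q-k) := by rw [e1]
    _ = m.choose k * ((m-k).choose (p-k) * (m-p).choose (q-k)) := by ring
    _ = m.choose k * ((m-k).choose (q-k) * (m-q).choose (p-k)) := by rw [e3]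
    _ = (m.choose k * (m-k).choose (q-k)) * (m-q).choose (p-k) := by ring
    _ = (m.choose q * q.choose k) * (m-q).choose (p-k) := by rw [e2]
    _ = m.choose q * (q.choose k * (m-q).choose (p-k)) := by ring

lemma sum_sym (p q m : ℕ) (hp : p ≤ m) (hq : q ≤ m) :
    (m.choose p : ℝ) * (∑ k ∈ Finset.range (q+1), (-1:ℝ)^k * p.choose k * ((m-p).choose (q-k)))
      = (m.choose q : ℝ) * (∑ k ∈ Finset.range (p+1), (-1:ℝ)^k * q.choose k * ((m-q).choose (p-k))) := by
  wlog hqp : q ≤ p with H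
  · exact (H q p m hq hp (by omega)).symm
  · have hsub : Finset.range (q+1) ⊆ Finset.range (p+1) := by
      intro x hx; rw [Finset.mem_range] at *; omega
    have hzero : ∀ x ∈ Finset.range (p+1), x ∉ Finset.range (q+1) →
        (-1:ℝ)^x * q.choose x * ((m-q).choose (p-x)) = 0 := by
      intro x _ hx
      rw [Finset.mem_range] at hx
      have : q.choose x = 0 := Nat.choose_eq_zero_of_lt (by omega)
      rw [this]
      simp
    rw [← Finset.sum_subset hsub hzero]
    rw [Finset.mul_sum, Finset.mul_sum]
    apply Finset.sum_congr rfl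
    intro k hk
    rw [Finset.mem_range] at hk
    have := nat_sym_id m p q k hp hq (by omega) hqp
    have hcast : (m.choose p : ℝ) * (p.choose k * ((m-p).choose (q-k)))
        = (m.choose q : ℝ) * (q.choose k * ((m-q).choose (p-k))) := by exact_mod_cast this
    calc (m.choose p : ℝ) * ((-1:ℝ)^k * p.choose k * ((m-p).choose (q-k)))
        = (-1:ℝ)^k * ((m.choose p : ℝ) * (p.choose k * ((m-p).choose (q-k)))) := by ring
      _ = (-1:ℝ)^k * ((m.choose q : ℝ) * (q.choose k * ((m-q).choose (p-k)))) := by rw [hcast]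
      _ = (m.choose q : ℝ) * ((-1:ℝ)^k * q.choose k * ((m-q).choose (p-k))) := by ring

lemma Fpqm_symm (p q m : ℕ) (hp : p ≤ m) (hq : q ≤ m) : Fpqm p q m = Fpqm q p m := by
  have hCp : (0:ℝ) < (m.choose p : ℝ) := by exact_mod_cast Nat.choose_pos hp
  have hCq : (0:ℝ) < (m.choose q : ℝ) := by exact_mod_cast Nat.choose_pos hq
  rw [Fpqm, Fpqm, div_eq_div_iff hCq.ne' hCp.ne']
  have := sum_sym p q m hp hq
  linarith [this]

lemma Fpqm_reflect (p q m : ℕ) (hp : p ≤ m) :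
    Fpqm (m-p) q m = (-1)^q * Fpqm p q m := by
  rw [Fpqm, Fpqm]
  rw [Nat.sub_sub_self hp]
  rw [← mul_div_assoc]
  congr 1
  have hreflect := Finset.sum_range_reflect
    (fun k => (-1:ℝ)^k * ((m-p).choose k) * (p.choose (q-k))) (q+1)
  simp only [Nat.add_sub_cancel] at hreflect
  rw [← hreflect]
  rw [Finset.mul_sum]
  apply Finset.sum_congr rfl
  intro j hj
  rw [Finset.mem_range] at hj
  have hqj : q - (q - j) = j := by omega
  rw [hqj]
  have h1 : ((-1:ℝ))^(q-j) * (-1)^j = (-1)^q := by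
    rw [← pow_add]; congr 1; omega
  have h2 : ((-1:ℝ))^j * ((-1:ℝ))^j = 1 := by
    rw [← pow_add, show j + j = 2*j by omega, pow_mul]; norm_num
  have h3 : ((-1:ℝ))^(q-j) = (-1)^q * (-1)^j := by
    calc ((-1:ℝ))^(q-j) = ((-1:ℝ))^(q-j) * (((-1:ℝ))^j * ((-1:ℝ))^j) := by rw [h2, mul_one]
      _ = (((-1:ℝ))^(q-j) * ((-1:ℝ))^j) * ((-1:ℝ))^j := by ring
      _ = (-1)^q * (-1)^j := by rw [h1]
  rw [h3]
  ring

lemma abs_Fpqm_reflect (p q m : ℕ) (hp : p ≤ m) :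
    |Fpqm (m-p) q m| = |Fpqm p q m| := by
  rw [Fpqm_reflect p q m hp, abs_mul, abs_pow, abs_neg, abs_one, one_pow, one_mul]

theorem stmt9 (p q m : ℕ) (hm : 1 ≤ m) (hp : p ≤ m) (hq : q ≤ m) :
    |Fpqm p q m| ≤
      Real.exp (-((min p (m - p) : ℝ) * (min q (m - q) : ℝ) / (2 * m))) := by
  have hm0 : 0 < m := hm
  set a := min p (m - p) with ha
  set b := min q (m - q) with hb
  have haM : a ≤ m := by omega
  have hbM : b ≤ m := by omega
  have h2a : 2*a ≤ m := by omega
  have h2b : 2*b ≤ m := by omega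
  -- |F p q| = |F a q|
  have step1 : |Fpqm p q m| = |Fpqm a q m| := by
    rcases le_total p (m - p) with h | h
    · have : a = p := by omega
      rw [this]
    · have : a = m - p := by omega
      rw [this, abs_Fpqm_reflect p q m hp]
  -- |F a q| = |F a b|
  have step2 : |Fpqm a q m| = |Fpqm a b m| := by
    rcases le_total q (m - q) with h | h
    · have : b = q := by omega
      rw [this]
    · have : b = m - q := by omega
      rw [this]
      have e1 : Fpqm a (m - q) m = Fpqm (m - q) a m := Fpqm_symm a (m-q) m haM (by omega)
      have e2 : |Fpqm (m - q) a m| = |Fpqm q a m| := abs_Fpqm_reflect q a m hq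
      have e3 : Fpqm q a m = Fpqm a q m := Fpqm_symm q a m hq haM
      rw [e1, e2, e3]
  rw [step1, step2]
  have hminp : (min (p:ℝ) ((m:ℝ) - p)) = (a:ℝ) := by rw [ha, Nat.cast_min, Nat.cast_sub hp]
  have hminq : (min (q:ℝ) ((m:ℝ) - q)) = (b:ℝ) := by rw [hb, Nat.cast_min, Nat.cast_sub hq]
  rw [hminp, hminq, ← neg_div]
  rcases le_total a b with hab | hab
  · exact core a b m hm0 hab h2b
  · have e4 : Fpqm a b m = Fpqm b a m := Fpqm_symm a b m haM hbM
    rw [e4, mul_comm]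
    exact core b a m hm0 hab h2a

end KrawtchoukAux2
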